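/- Let X be a real normed space equipped with its Borel σ-algebra, μ a Borel probability measure on X, and φ a flow on X, i.e., a family of maps φ_t : X → X (t ∈ ℝ) with φ_0 = id and φ_{s+t} = φ_s ∘ φ_t for all s, t ∈ ℝ, such that each φ_t is Borel measurable and measure-preserving for μ (meaning μ(φ_t^{−1}(A)) = μ(A) for every Borel A). Let ξ : [0,∞) → [0,∞) be a concave strictly increasing bijection and assume: (i) there is C₀ ≥ 0 with ∫ exp(3·ξ^{−1}(‖v‖)) dμ(v) ≤ C₀; (ii) there is c > 0 such that for every R > 0, every x ∈ X with ‖x‖ ≤ R, and every t ∈ ℝ with |t| ≤ c/R, one has ‖φ_t(x)‖ ≤ 2R. Then there is a constant C, depending only on C₀, c and ξ, such that for every integer i ≥ 1 there exists a Borel set Σ^i ⊆ X with μ(X ∖ Σ^i) ≤ C·e^{−2i} and such that every u₀ ∈ Σ^i satisfies ‖φ_t(u₀)‖ ≤ 2·ξ(1 + i + ln(1+|t|)) for all t ∈ ℝ. -/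

import Mathlib

open MeasureTheory

set_option maxHeartbeats 1000000

/-- Abstract Bourgain globalization (Proposition 5.2): given an invariant probability
measure with exponential moment bound and a flow with the local doubling property on
time intervals of length `c/R` for data of size `R`, there are statistical ensembles
`Σ^i` of almost full measure on which the flow grows at most like
`2 ξ(1 + i + ln(1+|t|))`. -/
theorem stmt6 {X : Type*} [NormedAddCommGroup X] [MeasurableSpace X] [BorelSpace X]
    (μ : Measure X) [IsProbabilityMeasure μ]
    (φ : ℝ → X → X)
    (h0 : ∀ x, φ 0 x = x)
    (hadd : ∀ s t : ℝ, ∀ x, φ (s + t) x = φ s (φ t x))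
    (hmeas : ∀ t : ℝ, Measurable (φ t))
    (hpres : ∀ t : ℝ, ∀ A : Set X, MeasurableSet A → μ (φ t ⁻¹' A) = μ A)
    (ξ ψ : ℝ → ℝ)
    (hconc : ConcaveOn ℝ (Set.Ici 0) ξ)
    (hmono : StrictMonoOn ξ (Set.Ici 0))
    (hbij : Set.BijOn ξ (Set.Ici 0) (Set.Ici 0))
    (hψξ : ∀ x ∈ Set.Ici (0 : ℝ), ψ (ξ x) = x)
    (hξψ : ∀ y ∈ Set.Ici (0 : ℝ), ξ (ψ y) = y)
    (C₀ : ℝ) (hC₀ : 0 ≤ C₀)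
    (hint : ∫⁻ v, ENNReal.ofReal (Real.exp (3 * ψ ‖v‖)) ∂μ ≤ ENNReal.ofReal C₀)
    (c : ℝ) (hc : 0 < c)
    (hdouble : ∀ R : ℝ, 0 < R → ∀ x : X, ‖x‖ ≤ R →
      ∀ t : ℝ, |t| ≤ c / R → ‖φ t x‖ ≤ 2 * R) :
    ∃ C : ℝ, 0 ≤ C ∧ ∀ i : ℕ, 1 ≤ i → ∃ S : Set X, MeasurableSet S ∧
      μ Sᶜ ≤ ENNReal.ofReal (C * Real.exp (-2 * (i : ℝ))) ∧
      ∀ u₀ ∈ S, ∀ t : ℝ,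
        ‖φ t u₀‖ ≤ 2 * ξ (1 + (i : ℝ) + Real.log (1 + |t|)) := by
  -- basic facts about ξ and ψ
  have hξnn : ∀ x : ℝ, 0 ≤ x → 0 ≤ ξ x := fun x hx => hbij.mapsTo hx
  have hξ0 : ξ 0 = 0 := by
    by_contra h
    have h0pos : 0 < ξ 0 := lt_of_le_of_ne (hξnn 0 le_rfl) (Ne.symm h)
    obtain ⟨x, hx, hxe⟩ := hbij.surjOn (show ξ 0 / 2 ∈ Set.Ici (0 : ℝ) by
      simp only [Set.mem_Ici]; linarith)
    rcases eq_or_lt_of_le (Set.mem_Ici.mp hx) with hx0 | hx0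
    · rw [← hx0] at hxe; linarith
    · have := hmono (Set.mem_Ici.mpr le_rfl) hx hx0
      linarith
  have hξmonoOn : MonotoneOn ξ (Set.Ici 0) := hmono.monotoneOn
  have hξpos : ∀ x : ℝ, 0 < x → 0 < ξ x := by
    intro x hx
    have := hmono (Set.mem_Ici.mpr le_rfl) (Set.mem_Ici.mpr hx.le) hx
    rwa [hξ0] at this
  have hψnn : ∀ y : ℝ, 0 ≤ y → 0 ≤ ψ y := by
    intro y hy
    obtain ⟨x, hx, hxe⟩ := hbij.surjOn (Set.mem_Ici.mpr hy)
    rw [← hxe, hψξ x hx]; exact hx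
  -- Chebyshev bound
  have cheb : ∀ m : ℝ, 0 ≤ m →
      μ {v : X | ξ m ≤ ‖v‖} ≤ ENNReal.ofReal (C₀ * Real.exp (-(3 * m))) := by
    intro m hm
    have hAm : MeasurableSet {v : X | ξ m ≤ ‖v‖} :=
      measurableSet_le measurable_const measurable_norm
    have key : ENNReal.ofReal (Real.exp (3 * m)) * μ {v : X | ξ m ≤ ‖v‖}
        ≤ ENNReal.ofReal C₀ := by
      have h1 : ENNReal.ofReal (Real.exp (3 * m)) * μ {v : X | ξ m ≤ ‖v‖}
          = ∫⁻ v, {v : X | ξ m ≤ ‖v‖}.indicator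
              (fun _ => ENNReal.ofReal (Real.exp (3 * m))) v ∂μ := by
        rw [lintegral_indicator hAm, setLIntegral_const]
      rw [h1]
      refine le_trans (lintegral_mono fun v => ?_) hint
      by_cases hv : v ∈ {v : X | ξ m ≤ ‖v‖}
      · rw [Set.indicator_of_mem hv]
        apply ENNReal.ofReal_le_ofReal
        apply Real.exp_le_exp.mpr
        have hvψ : m ≤ ψ ‖v‖ := by
          by_contra hcon
          push_neg at hcon
          have h2 : ξ (ψ ‖v‖) < ξ m :=
            hmono (Set.mem_Ici.mpr (hψnn _ (norm_nonneg v))) (Set.mem_Ici.mpr hm) hcon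
          rw [hξψ _ (Set.mem_Ici.mpr (norm_nonneg v))] at h2
          exact absurd hv (by simpa using not_le.mpr h2)
        linarith
      · rw [Set.indicator_of_notMem hv]; exact zero_le
    have hexp : ENNReal.ofReal (Real.exp (3 * m)) ≠ 0 := by
      simp [Real.exp_pos]
    have hexp' : ENNReal.ofReal (Real.exp (3 * m)) ≠ ⊤ := ENNReal.ofReal_ne_top
    have key' : μ {v : X | ξ m ≤ ‖v‖} * ENNReal.ofReal (Real.exp (3 * m))
        ≤ ENNReal.ofReal C₀ := by rw [mul_comm]; exact key
    have hdiv : μ {v : X | ξ m ≤ ‖v‖}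
        ≤ ENNReal.ofReal C₀ / ENNReal.ofReal (Real.exp (3 * m)) :=
      (ENNReal.le_div_iff_mul_le (Or.inl hexp) (Or.inl hexp')).mpr key'
    refine le_trans hdiv (le_of_eq ?_)
    rw [← ENNReal.ofReal_div_of_pos (Real.exp_pos _)]
    congr 1
    rw [Real.exp_neg]
    ring
  -- concavity: linear bound
  have hconcL : ∀ m : ℝ, 1 ≤ m → ξ m ≤ m * ξ 1 := by
    intro m hm
    have hm0 : (0 : ℝ) < m := lt_of_lt_of_le one_pos hm
    have ha : (0 : ℝ) ≤ 1 - 1 / m := by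
      have : 1 / m ≤ 1 := by rw [div_le_one hm0]; exact hm
      linarith
    have hb : (0 : ℝ) ≤ 1 / m := by positivity
    have hab : (1 - 1 / m) + 1 / m = 1 := by ring
    have hcc := hconc.2 (Set.mem_Ici.mpr le_rfl) (Set.mem_Ici.mpr hm0.le) ha hb hab
    have he : (1 - 1 / m) • (0 : ℝ) + (1 / m) • m = 1 := by
      field_simp
      simp [smul_eq_mul, hm0.ne']
    rw [he] at hcc
    simp only [smul_eq_mul, hξ0, mul_zero, zero_add] at hcc
    have := mul_le_mul_of_nonneg_left hcc hm0.le
    rw [← mul_assoc, mul_one_div, div_self hm0.ne', one_mul] at this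
    linarith
  have hξ1 : 0 ≤ ξ 1 := hξnn 1 one_pos.le
  set K : ℝ := C₀ * (2 * ξ 1 / c + 3) with hKdef
  have hKnn : 0 ≤ K := by
    apply mul_nonneg hC₀
    have : 0 ≤ 2 * ξ 1 / c := by positivity
    linarith
  refine ⟨2 * K, by linarith, ?_⟩
  intro i hi
  have hi1 : (1 : ℝ) ≤ (i : ℝ) := by exact_mod_cast hi
  set R : ℕ → ℝ := fun j => ξ ((i : ℝ) + j) with hRdef
  have hmj : ∀ j : ℕ, (1 : ℝ) ≤ (i : ℝ) + j := by
    intro j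
    have : (0 : ℝ) ≤ j := Nat.cast_nonneg j
    linarith
  have hRpos : ∀ j, 0 < R j := fun j => hξpos _ (by linarith [hmj j])
  set T : ℕ → ℝ := fun j => c / R j with hTdef
  have hTpos : ∀ j, 0 < T j := fun j => div_pos hc (hRpos j)
  set N : ℕ → ℕ := fun j => ⌈Real.exp (j : ℝ) / T j⌉₊ with hNdef
  have hNT : ∀ j : ℕ, Real.exp (j : ℝ) ≤ (N j : ℝ) * T j := by
    intro j
    rw [← div_le_iff₀ (hTpos j)]
    exact Nat.le_ceil _
  set B : ℕ → Set X := fun j => {v : X | ‖v‖ ≤ R j} with hBdef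
  have hBmeas : ∀ j, MeasurableSet (B j) :=
    fun j => measurableSet_le measurable_norm measurable_const
  set S : ℕ → Set X := fun j =>
    ⋂ k ∈ Finset.Icc (-(N j : ℤ)) (N j : ℤ), (φ ((k : ℝ) * T j)) ⁻¹' (B j) with hSdef
  have hSmeas : ∀ j, MeasurableSet (S j) := by
    intro j
    exact Finset.measurableSet_biInter _ fun k _ => (hmeas _) (hBmeas j)
  refine ⟨⋂ j, S j, MeasurableSet.iInter hSmeas, ?_, ?_⟩
  · -- measure bound
    have hSc : ∀ j, μ (S j)ᶜ ≤
        ENNReal.ofReal (K * Real.exp (-2 * (i : ℝ)) * Real.exp (-(j : ℝ))) := by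
      intro j
      have hcompl : (S j)ᶜ = ⋃ k ∈ Finset.Icc (-(N j : ℤ)) (N j : ℤ),
          ((φ ((k : ℝ) * T j)) ⁻¹' (B j))ᶜ := by
        rw [hSdef]; simp [Set.compl_iInter]
      rw [hcompl]
      refine le_trans (measure_biUnion_finset_le _ _) ?_
      have hterm : ∀ k : ℤ, μ ((φ ((k : ℝ) * T j)) ⁻¹' (B j))ᶜ
          ≤ ENNReal.ofReal (C₀ * Real.exp (-(3 * ((i : ℝ) + j)))) := by
        intro k
        rw [← Set.preimage_compl, hpres _ _ (hBmeas j).compl]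
        refine le_trans (measure_mono ?_) (cheb ((i : ℝ) + j) (by linarith [hmj j]))
        intro v hv
        simp only [hBdef, Set.mem_compl_iff, Set.mem_setOf_eq, not_le] at hv
        exact le_of_lt hv
      refine le_trans (Finset.sum_le_sum fun k _ => hterm k) ?_
      rw [Finset.sum_const, Int.card_Icc]
      have hcard : (((N j : ℤ) + 1 - (-(N j : ℤ))).toNat : ℕ) = 2 * N j + 1 := by
        omega
      rw [hcard]
      rw [nsmul_eq_mul]
      rw [← ENNReal.ofReal_natCast, ← ENNReal.ofReal_mul (by positivity)]
      apply ENNReal.ofReal_le_ofReal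
      -- real arithmetic
      push_cast
      have hN1 : (N j : ℝ) ≤ Real.exp (j : ℝ) * R j / c + 1 := by
        have h1 : Real.exp (j : ℝ) / T j = Real.exp (j : ℝ) * R j / c := by
          rw [hTdef]; rw [div_div_eq_mul_div]
        have h2 : (0 : ℝ) ≤ Real.exp (j : ℝ) / T j :=
          div_nonneg (Real.exp_pos _).le (hTpos j).le
        calc (N j : ℝ) ≤ Real.exp (j : ℝ) / T j + 1 := (Nat.ceil_lt_add_one h2).le
          _ = Real.exp (j : ℝ) * R j / c + 1 := by rw [h1]
      have hR1 : R j ≤ ((i : ℝ) + j) * ξ 1 := hconcL _ (hmj j)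
      have hm1 : (i : ℝ) + j ≤ Real.exp ((i : ℝ) + j) := by
        linarith [Real.add_one_le_exp ((i : ℝ) + j)]
      have hstep1 : (2 * (N j : ℝ) + 1) * Real.exp (-(3 * ((i : ℝ) + j)))
          ≤ (2 * ξ 1 / c + 3) * (Real.exp (-2 * (i : ℝ)) * Real.exp (-(j : ℝ))) := by
        have hA : Real.exp (-2 * (i : ℝ)) * Real.exp (-(j : ℝ))
            = Real.exp (-2 * (i : ℝ) - j) := by
          rw [← Real.exp_add]; ring_nf
        rw [hA]
        have hexp3 : (0 : ℝ) < Real.exp (-(3 * ((i : ℝ) + j))) := Real.exp_pos _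
        have step_a : (2 * (N j : ℝ) + 1) ≤ 2 * (Real.exp (j : ℝ) * R j / c) + 3 := by
          linarith
        have step_b : Real.exp (j : ℝ) * R j / c ≤ (ξ 1 / c) * (((i : ℝ) + j) * Real.exp (j : ℝ)) := by
          have h3 : Real.exp (j : ℝ) * R j ≤ ξ 1 * (((i : ℝ) + j) * Real.exp (j : ℝ)) := by
            calc Real.exp (j : ℝ) * R j
                ≤ Real.exp (j : ℝ) * (((i : ℝ) + j) * ξ 1) :=
                  mul_le_mul_of_nonneg_left hR1 (Real.exp_pos _).le
              _ = ξ 1 * (((i : ℝ) + j) * Real.exp (j : ℝ)) := by ring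
          rw [div_mul_eq_mul_div]
          exact (div_le_div_iff_of_pos_right hc).mpr h3
        have step_c : ((i : ℝ) + j) * Real.exp (j : ℝ) * Real.exp (-(3 * ((i : ℝ) + j)))
            ≤ Real.exp (-2 * (i : ℝ) - j) := by
          have h4 : Real.exp ((i : ℝ) + j) * Real.exp (j : ℝ) *
              Real.exp (-(3 * ((i : ℝ) + j))) = Real.exp (-2 * (i : ℝ) - j) := by
            rw [← Real.exp_add, ← Real.exp_add]; congr 1; ring
          calc ((i : ℝ) + j) * Real.exp (j : ℝ) * Real.exp (-(3 * ((i : ℝ) + j)))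
              ≤ Real.exp ((i : ℝ) + j) * Real.exp (j : ℝ) *
                Real.exp (-(3 * ((i : ℝ) + j))) := by
                apply mul_le_mul_of_nonneg_right _ hexp3.le
                exact mul_le_mul_of_nonneg_right hm1 (Real.exp_pos _).le
            _ = Real.exp (-2 * (i : ℝ) - j) := h4
        have step_d : Real.exp (-(3 * ((i : ℝ) + j))) ≤ Real.exp (-2 * (i : ℝ) - j) := by
          apply Real.exp_le_exp.mpr
          have h5 : (0 : ℝ) ≤ j := Nat.cast_nonneg j
          nlinarith
        have hc' : (0 : ℝ) ≤ ξ 1 / c := by positivity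
        calc (2 * (N j : ℝ) + 1) * Real.exp (-(3 * ((i : ℝ) + j)))
            ≤ (2 * (Real.exp (j : ℝ) * R j / c) + 3) * Real.exp (-(3 * ((i : ℝ) + j))) := by
              apply mul_le_mul_of_nonneg_right step_a hexp3.le
          _ ≤ (2 * ((ξ 1 / c) * (((i : ℝ) + j) * Real.exp (j : ℝ))) + 3) *
              Real.exp (-(3 * ((i : ℝ) + j))) := by
              apply mul_le_mul_of_nonneg_right _ hexp3.le
              linarith
          _ = 2 * (ξ 1 / c) * (((i : ℝ) + j) * Real.exp (j : ℝ) *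
                Real.exp (-(3 * ((i : ℝ) + j)))) + 3 * Real.exp (-(3 * ((i : ℝ) + j))) := by
              ring
          _ ≤ 2 * (ξ 1 / c) * Real.exp (-2 * (i : ℝ) - j) +
                3 * Real.exp (-2 * (i : ℝ) - j) := by
              have := mul_le_mul_of_nonneg_left step_c (by positivity : (0:ℝ) ≤ 2 * (ξ 1 / c))
              linarith
          _ = (2 * ξ 1 / c + 3) * Real.exp (-2 * (i : ℝ) - j) := by ring
      calc (2 * (N j : ℝ) + 1) * (C₀ * Real.exp (-(3 * ((i : ℝ) + j))))
          = C₀ * ((2 * (N j : ℝ) + 1) * Real.exp (-(3 * ((i : ℝ) + j)))) := by ring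
        _ ≤ C₀ * ((2 * ξ 1 / c + 3) * (Real.exp (-2 * (i : ℝ)) * Real.exp (-(j : ℝ)))) :=
            mul_le_mul_of_nonneg_left hstep1 hC₀
        _ = K * Real.exp (-2 * (i : ℝ)) * Real.exp (-(j : ℝ)) := by rw [hKdef]; ring
    calc μ (⋂ j, S j)ᶜ = μ (⋃ j, (S j)ᶜ) := by rw [Set.compl_iInter]
      _ ≤ ∑' j, μ (S j)ᶜ := measure_iUnion_le _
      _ ≤ ∑' j : ℕ, ENNReal.ofReal (K * Real.exp (-2 * (i : ℝ)) * Real.exp (-(j : ℝ))) :=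
          ENNReal.tsum_le_tsum hSc
      _ ≤ ENNReal.ofReal (2 * K * Real.exp (-2 * (i : ℝ))) := by
          have hrw : ∀ j : ℕ, K * Real.exp (-2 * (i : ℝ)) * Real.exp (-(j : ℝ))
              = (K * Real.exp (-2 * (i : ℝ))) * Real.exp (-1) ^ j := by
            intro j
            rw [← Real.exp_nat_mul]
            congr 1
            congr 1
            ring
          have hr0 : (0 : ℝ) ≤ Real.exp (-1) := (Real.exp_pos _).le
          have hr1 : Real.exp (-1) < 1 := by
            rw [Real.exp_lt_one_iff]; norm_num
          have hsum : Summable (fun j : ℕ => K * Real.exp (-2 * (i : ℝ)) *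
              Real.exp (-(j : ℝ))) := by
            simp_rw [hrw]
            exact (summable_geometric_of_lt_one hr0 hr1).mul_left _
          rw [← ENNReal.ofReal_tsum_of_nonneg (fun j => by positivity) hsum]
          apply ENNReal.ofReal_le_ofReal
          have htsum : ∑' j : ℕ, K * Real.exp (-2 * (i : ℝ)) * Real.exp (-(j : ℝ))
              = (K * Real.exp (-2 * (i : ℝ))) * (1 - Real.exp (-1))⁻¹ := by
            simp_rw [hrw]
            rw [tsum_mul_left, tsum_geometric_of_lt_one hr0 hr1]
          rw [htsum]
          have hinv : (1 - Real.exp (-1))⁻¹ ≤ 2 := by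
            have h2e : (2 : ℝ) ≤ Real.exp 1 := by
              linarith [Real.add_one_le_exp 1]
            have hhalf : Real.exp (-1) ≤ 1 / 2 := by
              rw [Real.exp_neg]
              rw [inv_le_comm₀ (Real.exp_pos 1) (by norm_num)]
              linarith
            have hpos2 : (0 : ℝ) < 1 - Real.exp (-1) := by linarith
            rw [inv_le_comm₀ hpos2 (by norm_num)]
            linarith
          have hnn : (0 : ℝ) ≤ K * Real.exp (-2 * (i : ℝ)) := by positivity
          nlinarith
  · -- pointwise bound
    intro u₀ hu₀ t
    set j : ℕ := ⌈Real.log (1 + |t|)⌉₊ with hjdef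
    have habs : (0 : ℝ) ≤ |t| := abs_nonneg t
    have hlog0 : 0 ≤ Real.log (1 + |t|) := Real.log_nonneg (by linarith)
    have hjt : 1 + |t| ≤ Real.exp (j : ℝ) := by
      have h1 : Real.log (1 + |t|) ≤ (j : ℝ) := Nat.le_ceil _
      have h2 : (1 : ℝ) + |t| = Real.exp (Real.log (1 + |t|)) := by
        rw [Real.exp_log (by linarith)]
      rw [h2]
      exact Real.exp_le_exp.mpr h1
    have htN : |t| ≤ (N j : ℝ) * T j := by
      calc |t| ≤ Real.exp (j : ℝ) - 1 := by linarith
        _ ≤ (N j : ℝ) * T j := by linarith [hNT j, Real.exp_pos (j : ℝ)]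
    set k : ℤ := ⌊t / T j⌋ with hkdef
    have hk1 : (k : ℝ) ≤ t / T j := Int.floor_le _
    have hk2 : t / T j < (k : ℝ) + 1 := Int.lt_floor_add_one _
    have hdivle : t / T j ≤ (N j : ℝ) := by
      rw [div_le_iff₀ (hTpos j)]
      calc t ≤ |t| := le_abs_self t
        _ ≤ (N j : ℝ) * T j := htN
    have hdivge : -((N j : ℝ)) ≤ t / T j := by
      rw [le_div_iff₀ (hTpos j)]
      have : -|t| ≤ t := neg_abs_le t
      calc -(N j : ℝ) * T j = -((N j : ℝ) * T j) := by ring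
        _ ≤ -|t| := by linarith
        _ ≤ t := this
    have hkmem : k ∈ Finset.Icc (-(N j : ℤ)) (N j : ℤ) := by
      rw [Finset.mem_Icc]
      constructor
      · apply Int.le_floor.mpr
        push_cast
        exact hdivge
      · have : (k : ℝ) ≤ (N j : ℝ) := le_trans hk1 hdivle
        exact_mod_cast this
    have hu : ‖φ ((k : ℝ) * T j) u₀‖ ≤ R j := by
      have h1 : u₀ ∈ S j := Set.mem_iInter.mp hu₀ j
      rw [hSdef] at h1
      have h2 := Set.mem_iInter₂.mp h1 k hkmem
      exact h2
    set s : ℝ := t - (k : ℝ) * T j with hsdef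
    have hs0 : 0 ≤ s := by
      have := mul_le_mul_of_nonneg_right hk1 (hTpos j).le
      rw [div_mul_cancel₀ _ (hTpos j).ne'] at this
      simp only [hsdef]; linarith
    have hs1 : s ≤ T j := by
      have := mul_le_mul_of_nonneg_right hk2.le (hTpos j).le
      rw [div_mul_cancel₀ _ (hTpos j).ne'] at this
      simp only [hsdef]
      nlinarith [hTpos j]
    have hsabs : |s| ≤ c / R j := by
      rw [abs_of_nonneg hs0]
      calc s ≤ T j := hs1
        _ = c / R j := by rw [hTdef]
    have hφeq : φ t u₀ = φ s (φ ((k : ℝ) * T j) u₀) := by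
      have ht : t = s + (k : ℝ) * T j := by rw [hsdef]; ring
      rw [ht, hadd]
    have hdbl := hdouble (R j) (hRpos j) _ hu s hsabs
    rw [hφeq]
    calc ‖φ s (φ ((k : ℝ) * T j) u₀)‖ ≤ 2 * R j := hdbl
      _ ≤ 2 * ξ (1 + (i : ℝ) + Real.log (1 + |t|)) := by
        have hjle : (j : ℝ) ≤ Real.log (1 + |t|) + 1 := (Nat.ceil_lt_add_one hlog0).le
        have harg1 : (0 : ℝ) ≤ (i : ℝ) + j := by linarith [hmj j]
        have harg2 : (0 : ℝ) ≤ 1 + (i : ℝ) + Real.log (1 + |t|) := by linarith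
        have hle : (i : ℝ) + j ≤ 1 + (i : ℝ) + Real.log (1 + |t|) := by linarith
        have := hξmonoOn (Set.mem_Ici.mpr harg1) (Set.mem_Ici.mpr harg2) hle
        linarith
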